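/- Let ℓ be an odd prime, m ≥ 1, and X ∈ GL₂(Z/ℓ^{2m+1}Z) whose lower-left entry is divisible by ℓ^{2m}. Then there exists a primitive vector v ∈ (Z/ℓ^{2m+1}Z)² that is a simultaneous eigenvector of X and of every element of 𝕂(ℓ^{2m+1}) if and only if the two diagonal entries of X are congruent modulo ℓ^m and, writing X = [[a + ℓ^m·x, b],[ℓ^{2m}·z, a + ℓ^m·w]] with integers a, x, b, z, w, one has (x − w) ≡ (z − b) (mod ℓ) or (x − w) ≡ −(z − b) (mod ℓ). -/

import Mathlib

/-- A vector in `(ZMod N)²` is primitive (w.r.t. `ℓ ∣ N`) if its reduction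
modulo `ℓ` is nonzero. -/
def IsPrimitive (ℓ N : ℕ) (h : ℓ ∣ N) (v : Fin 2 → ZMod N) : Prop :=
  (fun i => ZMod.castHom h (ZMod ℓ) (v i)) ≠ 0

/-- Membership in the group `𝕂(ℓ^(2m+1))`: matrices `[[r, s],[ℓ^(2m)·s, t]]` with
`r ≡ t (mod ℓ^(2m))`. -/
def Kmem (ℓ m : ℕ) (g : Matrix (Fin 2) (Fin 2) (ZMod (ℓ ^ (2 * m + 1)))) : Prop :=
  ∃ r s t : ZMod (ℓ ^ (2 * m + 1)),
    g = !![r, s; (ℓ : ZMod (ℓ ^ (2 * m + 1))) ^ (2 * m) * s, t] ∧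
    ZMod.castHom (pow_dvd_pow ℓ (by omega : 2 * m ≤ 2 * m + 1)) (ZMod (ℓ ^ (2 * m))) r =
      ZMod.castHom (pow_dvd_pow ℓ (by omega : 2 * m ≤ 2 * m + 1)) (ZMod (ℓ ^ (2 * m))) t

private lemma castInt_eq_iff (n : ℕ) (a b : ℤ) :
    ((a : ZMod n) = (b : ZMod n)) ↔ (n:ℤ) ∣ b - a := by
  rw [ZMod.intCast_eq_intCast_iff, Int.modEq_iff_dvd]

private lemma isUnitCast {ℓ : ℕ} (hℓ : ℓ.Prime) (k : ℕ) {A : ℤ} (h : ¬ (ℓ:ℤ) ∣ A) :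
    IsUnit ((A : ZMod (ℓ^k))) := by
  have hp : Prime (ℓ:ℤ) := Nat.prime_iff_prime_int.mp hℓ
  obtain ⟨p, q, hpq⟩ : IsCoprime A ((ℓ:ℤ)^k) :=
    ((hp.coprime_iff_not_dvd.mpr h).symm).pow_right
  refine IsUnit.of_mul_eq_one ((p : ZMod (ℓ^k))) ?_
  have h2 : ((p * A + q * (ℓ:ℤ)^k : ℤ) : ZMod (ℓ^k)) = ((1:ℤ) : ZMod (ℓ^k)) := by rw [hpq]
  have h0 : ((ℓ : ZMod (ℓ^k)))^k = 0 := by rw [← Nat.cast_pow, ZMod.natCast_self]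
  push_cast at h2
  rw [h0] at h2
  linear_combination h2

private lemma mulVec_eq {R : Type*} [CommRing R] (M : Matrix (Fin 2) (Fin 2) R) (c lam : R)
    (h0 : M 0 0 + M 0 1 * c = lam) (h1 : M 1 0 + M 1 1 * c = lam * c) :
    M.mulVec ![1, c] = lam • ![1, c] := by
  funext i
  fin_cases i <;>
    simp [Matrix.mulVec, dotProduct, Fin.sum_univ_two]
  · linear_combination h0
  · linear_combination h1

private lemma mulVec_comp {R : Type*} [CommRing R] (M : Matrix (Fin 2) (Fin 2) R)
    (v : Fin 2 → R) (lam : R) (h : M.mulVec v = lam • v) :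
    M 0 0 * v 0 + M 0 1 * v 1 = lam * v 0 ∧ M 1 0 * v 0 + M 1 1 * v 1 = lam * v 1 := by
  constructor
  · have := congrFun h 0
    simpa [Matrix.mulVec, dotProduct, Fin.sum_univ_two] using this
  · have := congrFun h 1
    simpa [Matrix.mulVec, dotProduct, Fin.sum_univ_two] using this

private lemma ker_cast {ℓ : ℕ} {j k : ℕ} (h : j ≤ k) (u v : ZMod (ℓ^k))
    (he : ZMod.castHom (pow_dvd_pow ℓ h) (ZMod (ℓ^j)) u =
          ZMod.castHom (pow_dvd_pow ℓ h) (ZMod (ℓ^j)) v) :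
    ∃ d : ZMod (ℓ^k), v - u = (ℓ:ZMod (ℓ^k))^j * d := by
  obtain ⟨U, rfl⟩ := ZMod.intCast_surjective u
  obtain ⟨V, rfl⟩ := ZMod.intCast_surjective v
  rw [map_intCast, map_intCast, castInt_eq_iff] at he
  obtain ⟨d, hd⟩ := he
  refine ⟨((d:ℤ) : ZMod (ℓ^k)), ?_⟩
  have h2 := congrArg (fun t : ℤ => (t : ZMod (ℓ^k))) hd
  push_cast at h2
  linear_combination h2

set_option maxHeartbeats 1000000 in
/-- Let `X ∈ GL₂(ℤ/ℓ^(2m+1)ℤ)` have lower-left entry divisible by `ℓ^(2m)`.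
There is a primitive simultaneous eigenvector of `X` and of all of `𝕂(ℓ^(2m+1))` iff the
diagonal entries of `X` agree mod `ℓ^m` and, writing
`X = [[a + ℓ^m x, b],[ℓ^(2m) z, a + ℓ^m w]]`, one has `x - w ≡ ±(z - b) (mod ℓ)`. -/
theorem stmt_6 (ℓ m : ℕ) (hℓ : ℓ.Prime) (hℓodd : ℓ ≠ 2) (hm : 1 ≤ m)
    (X : Matrix.GeneralLinearGroup (Fin 2) (ZMod (ℓ ^ (2 * m + 1))))
    (hlow : ∃ c : ZMod (ℓ ^ (2 * m + 1)),
      X.val 1 0 = (ℓ : ZMod (ℓ ^ (2 * m + 1))) ^ (2 * m) * c) :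
    (∃ v : Fin 2 → ZMod (ℓ ^ (2 * m + 1)),
      IsPrimitive ℓ (ℓ ^ (2 * m + 1)) (dvd_pow_self ℓ (by omega : 2 * m + 1 ≠ 0)) v ∧
      (∃ lam : ZMod (ℓ ^ (2 * m + 1)), X.val.mulVec v = lam • v) ∧
      (∀ g : Matrix.GeneralLinearGroup (Fin 2) (ZMod (ℓ ^ (2 * m + 1))),
        Kmem ℓ m g.val → ∃ lam : ZMod (ℓ ^ (2 * m + 1)), g.val.mulVec v = lam • v)) ↔
    (ZMod.castHom (pow_dvd_pow ℓ (by omega : m ≤ 2 * m + 1)) (ZMod (ℓ ^ m)) (X.val 0 0) =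
        ZMod.castHom (pow_dvd_pow ℓ (by omega : m ≤ 2 * m + 1)) (ZMod (ℓ ^ m)) (X.val 1 1) ∧
      ∃ a x b z w : ℤ,
        X.val = !![(a : ZMod (ℓ ^ (2 * m + 1))) + (ℓ : ZMod (ℓ ^ (2 * m + 1))) ^ m * (x : ZMod (ℓ ^ (2 * m + 1))),
            (b : ZMod (ℓ ^ (2 * m + 1)));
            (ℓ : ZMod (ℓ ^ (2 * m + 1))) ^ (2 * m) * (z : ZMod (ℓ ^ (2 * m + 1))),
            (a : ZMod (ℓ ^ (2 * m + 1))) + (ℓ : ZMod (ℓ ^ (2 * m + 1))) ^ m * (w : ZMod (ℓ ^ (2 * m + 1)))] ∧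
        (x - w ≡ z - b [ZMOD (ℓ : ℤ)] ∨ x - w ≡ -(z - b) [ZMOD (ℓ : ℤ)])) := by
  haveI : Fact (1 < ℓ) := ⟨hℓ.one_lt⟩
  haveI : NeZero (ℓ ^ (2 * m + 1)) := ⟨pow_ne_zero _ hℓ.pos.ne'⟩
  have hp : Prime (ℓ : ℤ) := Nat.prime_iff_prime_int.mp hℓ
  have hℓne : (ℓ : ℤ) ≠ 0 := by exact_mod_cast hℓ.pos.ne'
  have hL0 : (ℓ : ZMod (ℓ ^ (2 * m + 1))) ^ (2 * m + 1) = 0 := by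
    rw [← Nat.cast_pow, ZMod.natCast_self]
  have h4m : (ℓ : ZMod (ℓ ^ (2 * m + 1))) ^ (2 * m) * (ℓ : ZMod (ℓ ^ (2 * m + 1))) ^ (2 * m) = 0 := by
    calc (ℓ : ZMod (ℓ ^ (2 * m + 1))) ^ (2 * m) * (ℓ : ZMod (ℓ ^ (2 * m + 1))) ^ (2 * m)
        = (ℓ : ZMod (ℓ ^ (2 * m + 1))) ^ (2 * m + 1) * (ℓ : ZMod (ℓ ^ (2 * m + 1))) ^ (2 * m - 1) := by
          rw [← pow_add, ← pow_add]; congr 1; omega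
      _ = 0 := by rw [hL0, zero_mul]
  have h3m : (ℓ : ZMod (ℓ ^ (2 * m + 1))) ^ (2 * m) * (ℓ : ZMod (ℓ ^ (2 * m + 1))) ^ m = 0 := by
    calc (ℓ : ZMod (ℓ ^ (2 * m + 1))) ^ (2 * m) * (ℓ : ZMod (ℓ ^ (2 * m + 1))) ^ m
        = (ℓ : ZMod (ℓ ^ (2 * m + 1))) ^ (2 * m + 1) * (ℓ : ZMod (ℓ ^ (2 * m + 1))) ^ (m - 1) := by
          rw [← pow_add, ← pow_add]; congr 1; omega
      _ = 0 := by rw [hL0, zero_mul]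
  constructor
  · rintro ⟨v, hprim, ⟨lamX, hXv⟩, hK⟩
    -- the auxiliary element g₀ of 𝕂
    set M₀ : Matrix (Fin 2) (Fin 2) (ZMod (ℓ ^ (2 * m + 1))) :=
      !![1, 1; (ℓ : ZMod (ℓ ^ (2 * m + 1))) ^ (2 * m), 1] with hM₀
    have hdet : IsUnit M₀.det := by
      rw [hM₀, Matrix.det_fin_two_of]
      exact IsUnit.of_mul_eq_one (1 + (ℓ : ZMod (ℓ ^ (2 * m + 1))) ^ (2 * m))
        (by linear_combination -h4m)
    have hU2 := (Matrix.isUnit_iff_isUnit_det M₀).mpr hdet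
    set g₀ : Matrix.GeneralLinearGroup (Fin 2) (ZMod (ℓ ^ (2 * m + 1))) := hU2.unit with hg₀def
    have hg₀ : g₀.val = M₀ := hU2.unit_spec
    have hKm : Kmem ℓ m g₀.val := by
      refine ⟨1, 1, 1, ?_, rfl⟩
      rw [hg₀, hM₀, mul_one]
    obtain ⟨lam0, h0⟩ := hK g₀ hKm
    rw [hg₀, hM₀] at h0
    obtain ⟨c0, c1⟩ := mulVec_comp _ _ _ h0
    simp at c0 c1
    -- v 0 is a unit
    obtain ⟨V0, hV0⟩ := ZMod.intCast_surjective (v 0)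
    have hv1 : v 1 = (lam0 - 1) * v 0 := by linear_combination c0
    have hred : ((V0 : ZMod ℓ)) ≠ 0 := by
      intro hz
      apply hprim
      funext i
      have hz0 : ZMod.castHom (dvd_pow_self ℓ (by omega : 2 * m + 1 ≠ 0)) (ZMod ℓ) (v 0) = 0 := by
        rw [← hV0, map_intCast]; exact hz
      fin_cases i
      · exact hz0
      · show ZMod.castHom (dvd_pow_self ℓ (by omega : 2 * m + 1 ≠ 0)) (ZMod ℓ) (v 1) = 0
        rw [hv1, map_mul, hz0, mul_zero]
    have hndV0 : ¬ (ℓ : ℤ) ∣ V0 := by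
      rw [← ZMod.intCast_zmod_eq_zero_iff_dvd]
      exact hred
    have hunit : IsUnit (v 0) := by
      rw [← hV0]; exact isUnitCast hℓ (2 * m + 1) hndV0
    -- the square relation
    have hu2v : v 0 * ((lam0 - 1) ^ 2 - (ℓ : ZMod (ℓ ^ (2 * m + 1))) ^ (2 * m)) = v 0 * 0 := by
      linear_combination -c1 + (1 - lam0) * hv1
    have hu2 : (lam0 - 1) ^ 2 = (ℓ : ZMod (ℓ ^ (2 * m + 1))) ^ (2 * m) := by
      have := hunit.mul_left_cancel hu2v
      linear_combination this
    obtain ⟨U, hUlift⟩ := ZMod.intCast_surjective (lam0 - 1)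
    have hUker : ((U ^ 2 : ℤ) : ZMod (ℓ ^ (2 * m + 1))) =
        (((ℓ : ℤ) ^ (2 * m) : ℤ) : ZMod (ℓ ^ (2 * m + 1))) := by
      push_cast
      rw [hUlift, hu2]
    rw [castInt_eq_iff] at hUker
    push_cast at hUker
    have hdvd2m : (ℓ : ℤ) ^ (2 * m) ∣ U ^ 2 := by
      obtain ⟨k, hk⟩ := hUker
      rw [pow_succ] at hk
      exact ⟨1 - ℓ * k, by linear_combination -hk⟩
    have hmU : (ℓ : ℤ) ^ m ∣ U := by
      have h2 : ((ℓ : ℤ) ^ m) ^ 2 ∣ U ^ 2 := by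
        rw [← pow_mul]
        have h : m * 2 = 2 * m := by ring
        rw [h]; exact hdvd2m
      exact (Int.pow_dvd_pow_iff two_ne_zero).mp h2
    obtain ⟨E, hE⟩ := hmU
    have hE2 : (ℓ : ℤ) ∣ 1 - E ^ 2 := by
      have heq : (ℓ : ℤ) ^ (2 * m) - U ^ 2 = (ℓ : ℤ) ^ (2 * m) * (1 - E ^ 2) := by
        rw [hE]; ring
      have hdvdE : (ℓ : ℤ) ^ (2 * m) * (ℓ : ℤ) ∣ (ℓ : ℤ) ^ (2 * m) * (1 - E ^ 2) := by
        rw [← heq, ← pow_succ]; exact hUker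
      exact (mul_dvd_mul_iff_left (pow_ne_zero (2 * m) hℓne)).mp hdvdE
    obtain ⟨ε, hεpm, hEε⟩ : ∃ ε : ℤ, (ε = 1 ∨ ε = -1) ∧ (ℓ : ℤ) ∣ E - ε := by
      have hmul : (ℓ : ℤ) ∣ (1 - E) * (1 + E) := by
        have h : 1 - E ^ 2 = (1 - E) * (1 + E) := by ring
        rwa [h] at hE2
      rcases hp.dvd_mul.mp hmul with hε | hε
      · obtain ⟨k, hk⟩ := hε
        exact ⟨1, Or.inl rfl, ⟨-k, by linear_combination -hk⟩⟩
      · obtain ⟨k, hk⟩ := hε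
        exact ⟨-1, Or.inr rfl, ⟨k, by linear_combination hk⟩⟩
    have hndE : ¬ (ℓ : ℤ) ∣ E := by
      intro hdE
      have hdε : (ℓ : ℤ) ∣ ε := by
        have := dvd_sub hdE hEε
        simpa using this
      rcases hεpm with rfl | rfl
      · exact hp.not_dvd_one hdε
      · exact hp.not_dvd_one (dvd_neg.mp hdε)
    -- the eigenvalue equation for X
    obtain ⟨c, hc⟩ := hlow
    obtain ⟨A0, hA0⟩ := ZMod.intCast_surjective (X.val 0 0)
    obtain ⟨B, hB⟩ := ZMod.intCast_surjective (X.val 0 1)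
    obtain ⟨D, hD⟩ := ZMod.intCast_surjective (X.val 1 1)
    obtain ⟨C, hC⟩ := ZMod.intCast_surjective c
    obtain ⟨cX0, cX1⟩ := mulVec_comp _ _ _ hXv
    rw [← hA0, ← hB] at cX0
    rw [hc, ← hC, ← hD] at cX1
    have key : (((ℓ : ℤ) ^ (2 * m) * C + D * U : ℤ) : ZMod (ℓ ^ (2 * m + 1))) =
        ((A0 * U + B * (ℓ : ℤ) ^ (2 * m) : ℤ) : ZMod (ℓ ^ (2 * m + 1))) := by
      have h' : v 0 * (((ℓ : ℤ) ^ (2 * m) * C + D * U : ℤ) : ZMod (ℓ ^ (2 * m + 1))) =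
          v 0 * ((A0 * U + B * (ℓ : ℤ) ^ (2 * m) : ℤ) : ZMod (ℓ ^ (2 * m + 1))) := by
        push_cast
        rw [hUlift]
        linear_combination cX1 - (lam0 - 1) * cX0 +
          (lamX - (D : ZMod (ℓ ^ (2 * m + 1))) + (B : ZMod (ℓ ^ (2 * m + 1))) * (lam0 - 1)) * hv1 +
          (B : ZMod (ℓ ^ (2 * m + 1))) * (v 0) * hu2
      exact hunit.mul_left_cancel h'
    rw [castInt_eq_iff] at key
    push_cast at key
    have key3 : (ℓ : ℤ) ^ (m + 1) ∣ (A0 - D) * E + (ℓ : ℤ) ^ m * (B - C) := by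
      have hfac : (A0 * U + B * (ℓ : ℤ) ^ (2 * m)) - ((ℓ : ℤ) ^ (2 * m) * C + D * U) =
          (ℓ : ℤ) ^ m * ((A0 - D) * E + (ℓ : ℤ) ^ m * (B - C)) := by
        rw [hE]; ring
      have h' : (ℓ : ℤ) ^ m * (ℓ : ℤ) ^ (m + 1) ∣
          (ℓ : ℤ) ^ m * ((A0 - D) * E + (ℓ : ℤ) ^ m * (B - C)) := by
        rw [← pow_add]
        have h : m + (m + 1) = 2 * m + 1 := by omega
        rw [h, ← hfac]
        exact key
      exact (mul_dvd_mul_iff_left (pow_ne_zero m hℓne)).mp h'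
    have hAD : (ℓ : ℤ) ^ m ∣ A0 - D := by
      have h1 : (ℓ : ℤ) ^ m ∣ (A0 - D) * E + (ℓ : ℤ) ^ m * (B - C) :=
        dvd_trans (pow_dvd_pow _ (by omega)) key3
      have h2 : (ℓ : ℤ) ^ m ∣ (A0 - D) * E := by
        have := dvd_sub h1 (Dvd.intro _ rfl : (ℓ : ℤ) ^ m ∣ (ℓ : ℤ) ^ m * (B - C))
        simpa using this
      have hcop : IsCoprime ((ℓ : ℤ) ^ m) E := (hp.coprime_iff_not_dvd.mpr hndE).pow_left
      exact hcop.dvd_of_dvd_mul_right h2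
    obtain ⟨δ', hδ'⟩ := hAD
    have hmod : (ℓ : ℤ) ∣ δ' * E + (B - C) := by
      have heq2 : (A0 - D) * E + (ℓ : ℤ) ^ m * (B - C) =
          (ℓ : ℤ) ^ m * (δ' * E + (B - C)) := by rw [hδ']; ring
      rw [heq2, pow_succ] at key3
      exact (mul_dvd_mul_iff_left (pow_ne_zero m hℓne)).mp key3
    have hmodε : (ℓ : ℤ) ∣ δ' * ε + (B - C) := by
      obtain ⟨k, hk⟩ := hEε
      obtain ⟨k2, hk2⟩ := hmod
      exact ⟨k2 - δ' * k, by linear_combination hk2 - δ' * hk⟩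
    constructor
    · rw [← hA0, ← hD, map_intCast, map_intCast, ZMod.intCast_eq_intCast_iff,
        Int.modEq_iff_dvd]
      push_cast
      exact ⟨-δ', by linear_combination -hδ'⟩
    · refine ⟨A0, 0, B, C, -δ', ?_, ?_⟩
      · have e00 : X.val 0 0 = (A0 : ZMod (ℓ ^ (2 * m + 1))) +
            (ℓ : ZMod (ℓ ^ (2 * m + 1))) ^ m * ((0 : ℤ) : ZMod (ℓ ^ (2 * m + 1))) := by
          rw [← hA0]; push_cast; ring
        have e11 : X.val 1 1 = (A0 : ZMod (ℓ ^ (2 * m + 1))) +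
            (ℓ : ZMod (ℓ ^ (2 * m + 1))) ^ m * ((-δ' : ℤ) : ZMod (ℓ ^ (2 * m + 1))) := by
          rw [← hD]
          have hD2 : (D : ℤ) = A0 + (ℓ : ℤ) ^ m * (-δ') := by linear_combination -hδ'
          rw [hD2]; push_cast; ring
        rw [Matrix.eta_fin_two X.val, e00, e11, ← hB, hc, ← hC]
      · rcases hεpm with rfl | rfl
        · left
          rw [Int.modEq_iff_dvd]
          obtain ⟨k, hk⟩ := hmodε
          exact ⟨-k, by linear_combination -hk⟩
        · right
          rw [Int.modEq_iff_dvd]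
          obtain ⟨k, hk⟩ := hmodε
          exact ⟨k, by linear_combination hk⟩
  · rintro ⟨hdiag, a, x, b, z, w, hXeq, hsign⟩
    obtain ⟨ε, hε2, k, hk⟩ : ∃ ε : ℤ, ε * ε = 1 ∧ ∃ k : ℤ, (z - b) - ε * (x - w) = ℓ * k := by
      rcases hsign with h | h
      · rw [Int.modEq_iff_dvd] at h
        obtain ⟨k, hk⟩ := h
        exact ⟨1, by norm_num, k, by linear_combination hk⟩
      · rw [Int.modEq_iff_dvd] at h
        obtain ⟨k, hk⟩ := h
        exact ⟨-1, by norm_num, -k, by linear_combination -hk⟩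
    have hkc := congrArg (fun i : ℤ => (i : ZMod (ℓ ^ (2 * m + 1)))) hk
    have hε2c := congrArg (fun i : ℤ => (i : ZMod (ℓ ^ (2 * m + 1)))) hε2
    push_cast at hkc hε2c
    refine ⟨![1, ((ε * ℓ ^ m : ℤ) : ZMod (ℓ ^ (2 * m + 1)))], ?_, ?_, ?_⟩
    · unfold IsPrimitive
      intro h
      have h0 : ZMod.castHom (dvd_pow_self ℓ (by omega : 2 * m + 1 ≠ 0)) (ZMod ℓ)
          (1 : ZMod (ℓ ^ (2 * m + 1))) = 0 := congrFun h 0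
      rw [map_one] at h0
      exact one_ne_zero h0
    · refine ⟨X.val 0 0 + X.val 0 1 * ((ε * ℓ ^ m : ℤ) : ZMod (ℓ ^ (2 * m + 1))),
        mulVec_eq _ _ _ rfl ?_⟩
      rw [hXeq]
      simp only [Matrix.cons_val', Matrix.cons_val_zero, Matrix.cons_val_one,
        Matrix.head_cons, Matrix.empty_val', Matrix.cons_val_fin_one, Matrix.head_fin_const,
        Matrix.of_apply]
      push_cast
      linear_combination (ℓ : ZMod (ℓ ^ (2 * m + 1))) ^ (2 * m) * hkc +
        (k : ZMod (ℓ ^ (2 * m + 1))) * hL0 -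
        (b : ZMod (ℓ ^ (2 * m + 1))) * (ℓ : ZMod (ℓ ^ (2 * m + 1))) ^ (2 * m) * hε2c
    · intro g hg
      obtain ⟨r, s, t, hgeq, hrt⟩ := hg
      obtain ⟨d, hdval⟩ := ker_cast (by omega : 2 * m ≤ 2 * m + 1) r t hrt
      refine ⟨r + s * ((ε * ℓ ^ m : ℤ) : ZMod (ℓ ^ (2 * m + 1))),
        mulVec_eq _ _ _ ?_ ?_⟩
      · rw [hgeq]
        simp only [Matrix.cons_val', Matrix.cons_val_zero, Matrix.cons_val_one,
          Matrix.head_cons, Matrix.empty_val', Matrix.cons_val_fin_one, Matrix.head_fin_const,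
          Matrix.of_apply]
      · rw [hgeq]
        simp only [Matrix.cons_val', Matrix.cons_val_zero, Matrix.cons_val_one,
          Matrix.head_cons, Matrix.empty_val', Matrix.cons_val_fin_one, Matrix.head_fin_const,
          Matrix.of_apply]
        push_cast
        linear_combination ((ε : ZMod (ℓ ^ (2 * m + 1))) * (ℓ : ZMod (ℓ ^ (2 * m + 1))) ^ m) * hdval +
          ((d : ZMod (ℓ ^ (2 * m + 1))) * (ε : ZMod (ℓ ^ (2 * m + 1)))) * h3m -
          s * (ℓ : ZMod (ℓ ^ (2 * m + 1))) ^ (2 * m) * hε2c
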